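/- arXiv:1811.11556 — 2 statements merged into one kernel-verified Lean document; each statement's English description precedes it below -/
import Mathlib

section
/- The Hermite wavefunctions are orthonormal in L²(ℝ): for all j, k ∈ ℕ, ∫_ℝ ψ_j(x) ψ_k(x) dx = 1 if j = k and 0 otherwise. -/
open MeasureTheory

/-- The `k`-th probabilists' Hermite polynomial (as a function), via the Rodrigues formula
`He_k(x) = (-1)^k e^{x²/2} (d/dx)^k e^{-x²/2}`. -/
noncomputable def hermiteHe (k : ℕ) (x : ℝ) : ℝ :=
  (-1) ^ k * Real.exp (x ^ 2 / 2) * iteratedDeriv k (fun t => Real.exp (-t ^ 2 / 2)) x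

/-- The `k`-th Hermite wavefunction `ψ_k(x) = He_k(x) e^{-x²/4} / √(√(2π) k!)`. -/
noncomputable def hermitePsi (k : ℕ) (x : ℝ) : ℝ :=
  hermiteHe k x * Real.exp (-x ^ 2 / 4) / Real.sqrt (Real.sqrt (2 * Real.pi) * k.factorial)

section Aux

open Polynomial Real Filter Topology

/-- The real Hermite polynomial. -/
noncomputable def HR (n : ℕ) : ℝ[X] := (Polynomial.hermite n).map (algebraMap ℤ ℝ)

lemma HR_eval (n : ℕ) (x : ℝ) : (HR n).eval x = Polynomial.aeval x (Polynomial.hermite n) := by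
  rw [HR, Polynomial.aeval_def, Polynomial.eval₂_eq_eval_map]

lemma hermiteHe_eq (n : ℕ) (x : ℝ) : hermiteHe n x = (HR n).eval x := by
  rw [HR_eval, hermiteHe, Polynomial.hermite_eq_deriv_gaussian', iteratedDeriv_eq_iterate]
  have : (fun t : ℝ => Real.exp (-t ^ 2 / 2)) = fun y : ℝ => Real.exp (-(y ^ 2 / 2)) := by
    funext t; rw [neg_div]
  rw [this]; ring

lemma hermite_derivative (n : ℕ) :
    Polynomial.derivative (Polynomial.hermite (n + 1)) = ((n : ℤ[X]) + 1) * Polynomial.hermite n := by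
  induction n with
  | zero => simp [Polynomial.hermite_one, Polynomial.hermite_zero]
  | succ n ih =>
    rw [Polynomial.hermite_succ (n + 1), Polynomial.derivative_sub, Polynomial.derivative_mul,
      Polynomial.derivative_X, ih, Polynomial.hermite_succ n]
    push_cast
    rw [Polynomial.derivative_mul]
    simp only [Polynomial.derivative_add, Polynomial.derivative_natCast, Polynomial.derivative_one]
    ring

lemma HR_succ (n : ℕ) : HR (n + 1) = X * HR n - Polynomial.derivative (HR n) := by
  rw [HR, Polynomial.hermite_succ, Polynomial.map_sub, Polynomial.map_mul, Polynomial.map_X,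
    ← Polynomial.derivative_map]
  rfl

lemma HR_derivative (n : ℕ) :
    Polynomial.derivative (HR (n + 1)) = ((n : ℝ[X]) + 1) * HR n := by
  rw [HR, Polynomial.derivative_map, hermite_derivative, Polynomial.map_mul,
    Polynomial.map_add, Polynomial.map_natCast, Polynomial.map_one]
  rfl

lemma HR_zero : HR 0 = 1 := by
  rw [HR, Polynomial.hermite_zero, Polynomial.map_C]; simp

/-- Gaussian weight. -/
noncomputable def GW (x : ℝ) : ℝ := Real.exp (-(x ^ 2 / 2))

lemma tendsto_poly_gauss_atTop (p : ℝ[X]) (b : ℝ) (hb : 0 < b) :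
    Tendsto (fun x => p.eval x * Real.exp (-(b * x ^ 2))) atTop (𝓝 0) := by
  apply squeeze_zero_norm' (a := fun x => |p.eval x| * Real.exp (-x))
  · filter_upwards [Filter.eventually_ge_atTop (1 / b)] with x hx
    have hx0 : (0 : ℝ) < x := lt_of_lt_of_le (by positivity) hx
    have h1 : x ≤ b * x ^ 2 := by
      have hbx : 1 ≤ b * x := by
        rw [div_le_iff₀ hb] at hx
        linarith [hx]
      calc x = 1 * x := (one_mul x).symm
        _ ≤ (b * x) * x := mul_le_mul_of_nonneg_right hbx hx0.le
        _ = b * x ^ 2 := by ring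
    rw [Real.norm_eq_abs, abs_mul, abs_of_pos (Real.exp_pos _)]
    exact mul_le_mul_of_nonneg_left (by
      rw [Real.exp_le_exp]; linarith) (abs_nonneg _)
  · have := p.tendsto_div_exp_atTop
    have h : Tendsto (fun x => |p.eval x / Real.exp x|) atTop (𝓝 |0|) := this.abs
    rw [abs_zero] at h
    refine h.congr (fun x => ?_)
    rw [abs_div, abs_of_pos (Real.exp_pos _), div_eq_mul_inv, ← Real.exp_neg]

lemma tendsto_poly_gauss_atBot (p : ℝ[X]) (b : ℝ) (hb : 0 < b) :
    Tendsto (fun x => p.eval x * Real.exp (-(b * x ^ 2))) atBot (𝓝 0) := by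
  have h := (tendsto_poly_gauss_atTop (p.comp (-X)) b hb).comp tendsto_neg_atBot_atTop
  refine h.congr (fun x => ?_)
  simp [Function.comp, Polynomial.eval_comp]

lemma exists_bound (p : ℝ[X]) :
    ∃ C : ℝ, ∀ x : ℝ, |p.eval x * Real.exp (-((1:ℝ)/4 * x ^ 2))| ≤ C := by
  set f : ℝ → ℝ := fun x => p.eval x * Real.exp (-((1:ℝ)/4 * x ^ 2)) with hf
  have hc : Continuous f :=
    (p.continuous).mul (Real.continuous_exp.comp (by fun_prop))
  have ht : Tendsto f atTop (𝓝 0) := tendsto_poly_gauss_atTop p _ (by norm_num)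
  have hb : Tendsto f atBot (𝓝 0) := tendsto_poly_gauss_atBot p _ (by norm_num)
  have h1 : ∀ᶠ x in atTop, |f x| ≤ 1 := by
    have := ht.abs
    rw [abs_zero] at this
    exact this.eventually (eventually_le_nhds one_pos)
  have h2 : ∀ᶠ x in atBot, |f x| ≤ 1 := by
    have := hb.abs
    rw [abs_zero] at this
    exact this.eventually (eventually_le_nhds one_pos)
  obtain ⟨M, hM⟩ := h1.exists_forall_of_atTop
  obtain ⟨m, hm⟩ := h2.exists_forall_of_atBot
  obtain ⟨C, hC⟩ := (isCompact_Icc (a := m) (b := M)).exists_bound_of_continuousOn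
    hc.continuousOn
  refine ⟨max C 1, fun x => ?_⟩
  rcases le_or_gt x M with hxM | hxM
  · rcases le_or_gt m x with hmx | hmx
    · have := hC x ⟨hmx, hxM⟩
      rw [Real.norm_eq_abs] at this
      exact le_trans this (le_max_left _ _)
    · exact le_trans (hm x hmx.le) (le_max_right _ _)
  · exact le_trans (hM x hxM.le) (le_max_right _ _)

lemma integrable_poly_gauss (p : ℝ[X]) :
    Integrable (fun x => p.eval x * GW x) := by
  obtain ⟨C, hC⟩ := exists_bound p
  refine Integrable.mono' ((integrable_exp_neg_mul_sq (b := (1:ℝ)/4) (by norm_num)).const_mul C)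
    ?_ ?_
  · exact ((p.continuous).mul
      (Real.continuous_exp.comp (by fun_prop))).aestronglyMeasurable
  · refine Filter.Eventually.of_forall (fun x => ?_)
    have : p.eval x * GW x = (p.eval x * Real.exp (-((1:ℝ)/4 * x ^ 2))) *
        Real.exp (-((1:ℝ)/4) * x ^ 2) := by
      rw [GW, mul_assoc, ← Real.exp_add]; ring_nf
    rw [Real.norm_eq_abs, this, abs_mul, abs_of_pos (Real.exp_pos _)]
    exact mul_le_mul_of_nonneg_right (hC x) (Real.exp_pos _).le

lemma hasDerivAt_poly_gauss (p : ℝ[X]) (x : ℝ) :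
    HasDerivAt (fun y => p.eval y * GW y)
      ((p.derivative.eval x - x * p.eval x) * GW x) x := by
  have h1 : HasDerivAt (fun y : ℝ => p.eval y) (p.derivative.eval x) x := p.hasDerivAt x
  have h0 : HasDerivAt (fun y : ℝ => -(y ^ 2 / 2)) (-x) x := by
    have := ((hasDerivAt_pow 2 x).div_const 2).neg
    exact this.congr_deriv (by simp)
  have h2 : HasDerivAt (fun y : ℝ => GW y) (-x * GW x) x := by
    simpa [GW, mul_comm] using h0.exp
  have := h1.mul h2
  refine this.congr_deriv ?_
  ring

lemma hasDerivAt_HR_gauss (k : ℕ) (x : ℝ) :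
    HasDerivAt (fun y => (HR k).eval y * GW y) (-((HR (k + 1)).eval x * GW x)) x := by
  have := hasDerivAt_poly_gauss (HR k) x
  convert this using 1
  rw [HR_succ]
  simp
  ring

lemma parts (p : ℝ[X]) (k : ℕ) :
    ∫ x : ℝ, p.eval x * ((HR (k + 1)).eval x * GW x)
      = ∫ x : ℝ, p.derivative.eval x * ((HR k).eval x * GW x) := by
  have hu : ∀ x : ℝ, HasDerivAt (fun y => p.eval y) (p.derivative.eval x) x :=
    fun x => p.hasDerivAt x
  have hv := hasDerivAt_HR_gauss k
  have huv' : Integrable ((fun y => p.eval y) * (fun x => -((HR (k + 1)).eval x * GW x))) := by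
    have := (integrable_poly_gauss (p * HR (k + 1))).neg
    refine this.congr (Filter.Eventually.of_forall fun x => ?_)
    simp [Polynomial.eval_mul]; ring
  have hu'v : Integrable ((fun y => p.derivative.eval y) * (fun x => (HR k).eval x * GW x)) := by
    have := integrable_poly_gauss (p.derivative * HR k)
    refine this.congr (Filter.Eventually.of_forall fun x => ?_)
    simp [Polynomial.eval_mul]; ring
  have huv : Integrable ((fun y => p.eval y) * (fun x => (HR k).eval x * GW x)) := by
    have := integrable_poly_gauss (p * HR k)
    refine this.congr (Filter.Eventually.of_forall fun x => ?_)
    simp [Polynomial.eval_mul]; ring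
  have h := integral_mul_deriv_eq_deriv_mul_of_integrable (fun x _ => hu x) (fun x _ => hv x) huv' hu'v huv
  have h' : ∫ x : ℝ, p.eval x * -((HR (k + 1)).eval x * GW x)
      = -∫ x : ℝ, p.eval x * ((HR (k + 1)).eval x * GW x) := by
    rw [← integral_neg]
    congr 1; funext x; ring
  rw [h'] at h
  exact neg_injective h

lemma key : ∀ k j : ℕ, ∫ x : ℝ, (HR j).eval x * (HR k).eval x * GW x
    = if j = k then (k.factorial : ℝ) * Real.sqrt (2 * Real.pi) else 0 := by
  intro k
  induction k with
  | zero =>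
    intro j
    cases j with
    | zero =>
      rw [if_pos rfl]
      have h0 : (∫ x : ℝ, (HR 0).eval x * (HR 0).eval x * GW x)
          = ∫ x : ℝ, Real.exp (-((1:ℝ)/2) * x ^ 2) := by
        congr 1; funext x
        simp only [HR_zero, Polynomial.eval_one, one_mul, GW]
        congr 1; ring
      rw [h0, integral_gaussian, Nat.factorial_zero, Nat.cast_one, one_mul]
      congr 1
      ring
    | succ j =>
      have h : (∫ x : ℝ, (HR (j+1)).eval x * (HR 0).eval x * GW x)
          = ∫ x : ℝ, (1 : ℝ[X]).eval x * ((HR (j+1)).eval x * GW x) := by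
        congr 1; funext x; simp [HR_zero]; try ring
      rw [h, parts 1 j]
      simp
  | succ k ih =>
    intro j
    cases j with
    | zero =>
      have h : (∫ x : ℝ, (HR 0).eval x * (HR (k+1)).eval x * GW x)
          = ∫ x : ℝ, (1 : ℝ[X]).eval x * ((HR (k+1)).eval x * GW x) := by
        congr 1; funext x; simp [HR_zero]; try ring
      rw [h, parts 1 k]
      simp
    | succ j =>
      have h : (∫ x : ℝ, (HR (j+1)).eval x * (HR (k+1)).eval x * GW x)
          = ∫ x : ℝ, (HR (j+1)).eval x * ((HR (k+1)).eval x * GW x) := by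
        congr 1; funext x; ring
      rw [h, parts (HR (j+1)) k]
      have h2 : (∫ x : ℝ, (Polynomial.derivative (HR (j+1))).eval x * ((HR k).eval x * GW x))
          = ((j : ℝ) + 1) * ∫ x : ℝ, (HR j).eval x * (HR k).eval x * GW x := by
        rw [← MeasureTheory.integral_const_mul]
        congr 1; funext x
        rw [HR_derivative]
        simp
        ring
      rw [h2, ih j]
      by_cases hjk : j = k
      · subst hjk
        rw [if_pos rfl, if_pos rfl, Nat.factorial_succ]
        push_cast
        ring
      · rw [if_neg hjk, if_neg (by simpa using hjk), mul_zero]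

end Aux

/-- The Hermite wavefunctions are orthonormal in `L²(ℝ)`. -/
theorem hermitePsi_orthonormal (j k : ℕ) :
    ∫ x : ℝ, hermitePsi j x * hermitePsi k x = if j = k then 1 else 0 := by
  have hpi : (0:ℝ) < Real.sqrt (2 * Real.pi) := Real.sqrt_pos.mpr (by positivity)
  set cj : ℝ := Real.sqrt (Real.sqrt (2 * Real.pi) * j.factorial) with hcj
  set ck : ℝ := Real.sqrt (Real.sqrt (2 * Real.pi) * k.factorial) with hck
  have hptw : ∀ x : ℝ, hermitePsi j x * hermitePsi k x
      = ((HR j).eval x * (HR k).eval x * GW x) / (cj * ck) := by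
    intro x
    rw [hermitePsi, hermitePsi, hermiteHe_eq, hermiteHe_eq]
    rw [div_mul_div_comm]
    congr 1
    rw [GW, show Real.exp (-(x ^ 2 / 2)) = Real.exp (-x ^ 2 / 4) * Real.exp (-x ^ 2 / 4) by
      rw [← Real.exp_add]; congr 1; ring]
    ring
  rw [show (∫ x : ℝ, hermitePsi j x * hermitePsi k x)
      = ∫ x : ℝ, ((HR j).eval x * (HR k).eval x * GW x) / (cj * ck) by
    congr 1; funext x; exact hptw x]
  rw [integral_div, key k j]
  by_cases hjk : j = k
  · subst hjk
    rw [if_pos rfl, if_pos rfl]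
    rw [hcj, Real.mul_self_sqrt (by positivity)]
    rw [div_eq_one_iff_eq (by positivity)]
    ring
  · rw [if_neg hjk, if_neg hjk, zero_div]
end

section
/- Cycle lemma for B frequencies (even type): let n ≥ 1, B ≥ 1, let σ ∈ S_n have m(σ) cycles, and let ω_0, …, ω_{B−1} : ℕ → ℝ be sequences such that ω_j(t) → ∞ for every j and |ω_j(t) − ω_k(t)| → ∞ for all j ≠ k, as t → ∞. Then for every bounded measurable f : ℝⁿ → ℝ with compact support, lim_{t → ∞} ∫_{ℝⁿ} ( ∏_{i=1}^n (1/B) ∑_{j=0}^{B−1} cos(ω_j(t)(x_{σ(i)} − x_i)) ) f(x) dx = (1/(2B))^{n − m(σ)} ∫_{ℝⁿ} f(x) dx. -/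
open Filter MeasureTheory
open Real Topology

/-- The setoid on `Fin n` whose classes are the cycles (orbits) of a permutation `σ`,
counting fixed points as singleton orbits. -/
def sameCycleSetoid {n : ℕ} (σ : Equiv.Perm (Fin n)) : Setoid (Fin n) :=
  ⟨σ.SameCycle, ⟨fun x => Equiv.Perm.SameCycle.refl σ x,
    fun h => h.symm, fun h h' => h.trans h'⟩⟩

/-- `cycleCount σ` is the number of cycles `m(σ)` of the permutation `σ`. -/
noncomputable def cycleCount {n : ℕ} (σ : Equiv.Perm (Fin n)) : ℕ :=
  Nat.card (Quotient (sameCycleSetoid σ))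

noncomputable def sgB (b : Bool) : ℝ := if b then 1 else -1

lemma sgB_abs (b : Bool) : |sgB b| = 1 := by cases b <;> simp [sgB]

lemma sgB_ne {b c : Bool} (h : b ≠ c) : sgB c = - sgB b := by
  cases b <;> cases c <;> simp_all [sgB]

lemma prod_cos_expand (n : ℕ) (θ : Fin n → ℝ) :
    ∏ i, Real.cos (θ i) =
      (1 / 2 : ℝ) ^ n * ∑ ε : Fin n → Bool,
        Real.cos (∑ i, sgB (ε i) * θ i) := by
  have key : (∏ i, (Real.cos (θ i) : ℂ)) =
      (((1 / 2 : ℝ) ^ n : ℝ) : ℂ) * ∑ ε : Fin n → Bool,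
        Complex.exp (((∑ i, sgB (ε i) * θ i : ℝ) : ℂ) * Complex.I) := by
    have h1 : ∀ i : Fin n, (Real.cos (θ i) : ℂ) =
        (1 / 2 : ℂ) * ∑ ε : Bool, Complex.exp (((sgB ε * θ i : ℝ) : ℂ) * Complex.I) := by
      intro i
      rw [Complex.ofReal_cos, Complex.cos, Fintype.sum_bool]
      simp only [sgB, if_true, if_false]
      push_cast
      ring_nf
    calc (∏ i, (Real.cos (θ i) : ℂ))
        = ∏ i, ((1 / 2 : ℂ) * ∑ ε : Bool, Complex.exp (((sgB ε * θ i : ℝ) : ℂ) * Complex.I)) :=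
          Finset.prod_congr rfl fun i _ => h1 i
      _ = (1 / 2 : ℂ) ^ n * ∏ i, ∑ ε : Bool, Complex.exp (((sgB ε * θ i : ℝ) : ℂ) * Complex.I) := by
          rw [Finset.prod_mul_distrib, Finset.prod_const, Finset.card_univ, Fintype.card_fin]
      _ = (1 / 2 : ℂ) ^ n * ∑ ε : Fin n → Bool, ∏ i,
            Complex.exp (((sgB (ε i) * θ i : ℝ) : ℂ) * Complex.I) := by
          rw [Finset.prod_univ_sum]
          rw [Fintype.piFinset_univ]
      _ = (((1 / 2 : ℝ) ^ n : ℝ) : ℂ) * ∑ ε : Fin n → Bool,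
            Complex.exp (((∑ i, sgB (ε i) * θ i : ℝ) : ℂ) * Complex.I) := by
          push_cast
          congr 1
          refine Finset.sum_congr rfl fun ε _ => ?_
          rw [← Complex.exp_sum, ← Finset.sum_mul]
  have := congrArg Complex.re key
  rw [← Complex.ofReal_prod] at this
  rw [Complex.ofReal_re, Complex.re_ofReal_mul, Complex.re_sum] at this
  simp only [Complex.exp_ofReal_mul_I_re] at this
  exact this

lemma tendsto_integral_cos_zero (n : ℕ) (f : (Fin n → ℝ) → ℝ) (hf : Integrable f)
    (a : ℕ → Fin n → ℝ) (k : Fin n) (hk : Tendsto (fun t => |a t k|) atTop atTop) :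
    Tendsto (fun t => ∫ x : Fin n → ℝ, Real.cos (∑ i, a t i * x i) * f x) atTop (𝓝 0) := by
  classical
  let W : ℕ → ((Fin n → ℝ) →L[ℝ] ℝ) := fun t =>
    (-(2 * π)⁻¹) • ∑ i, a t i • (ContinuousLinearMap.proj i : (Fin n → ℝ) →L[ℝ] ℝ)
  have hWapply : ∀ t (x : (Fin n → ℝ)), W t x = -(2 * π)⁻¹ * ∑ i, a t i * x i := by
    intro t x
    simp [W, ContinuousLinearMap.sum_apply, ContinuousLinearMap.proj_apply, Finset.mul_sum, mul_assoc]
  have hWk : ∀ t, |a t k| ≤ (2 * π) * ‖W t‖ := by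
    intro t
    have h1 : W t (Pi.single k 1) = -(2 * π)⁻¹ * a t k := by
      rw [hWapply]
      congr 1
      simp [Pi.single_apply, mul_ite, Finset.sum_ite_eq']
    have h2 : ‖W t (Pi.single k 1)‖ ≤ ‖W t‖ * ‖(Pi.single k 1 : (Fin n → ℝ))‖ :=
      (W t).le_opNorm _
    rw [h1] at h2
    have h3 : ‖(Pi.single k 1 : (Fin n → ℝ))‖ = 1 := by
      rw [Pi.norm_single]; simp
    rw [h3, mul_one] at h2
    have hπ : (0:ℝ) < 2 * π := by positivity
    calc |a t k| = (2 * π) * ‖-(2 * π)⁻¹ * a t k‖ := by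
          rw [norm_mul, Real.norm_eq_abs, Real.norm_eq_abs, abs_neg, abs_inv, abs_of_pos hπ]
          field_simp
      _ ≤ (2 * π) * ‖W t‖ := by
          exact mul_le_mul_of_nonneg_left h2 hπ.le
  have hW : Tendsto W atTop (cocompact ((Fin n → ℝ) →L[ℝ] ℝ)) := by
    rw [← Metric.cobounded_eq_cocompact, ← tendsto_norm_atTop_iff_cobounded]
    have hπ : (0:ℝ) < 2 * π := by positivity
    have : Tendsto (fun t => (2 * π)⁻¹ * |a t k|) atTop atTop :=
      hk.const_mul_atTop (by positivity)
    refine tendsto_atTop_mono (fun t => ?_) this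
    rw [inv_mul_le_iff₀ hπ] at *
    · exact hWk t
  have hRL := (tendsto_integral_exp_smul_cocompact
      (fun x : (Fin n → ℝ) => (f x : ℂ)) volume).comp hW
  have hint : ∀ t, Integrable (fun x : (Fin n → ℝ) =>
      Complex.exp (((∑ i, a t i * x i : ℝ) : ℂ) * Complex.I) * (f x : ℂ)) := by
    intro t
    refine Integrable.bdd_mul (c := 1) hf.ofReal ?_ (ae_of_all _ fun x => ?_)
    · have hc : Continuous fun x : Fin n → ℝ => ((∑ i, a t i * x i : ℝ) : ℂ) * Complex.I :=
        (Complex.continuous_ofReal.comp (continuous_finset_sum _ fun i _ =>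
          (continuous_const.mul (continuous_apply i)))).mul continuous_const
      exact (Complex.continuous_exp.comp hc).aestronglyMeasurable
    · rw [Complex.norm_exp_ofReal_mul_I]
  have heq : ∀ t, (fun x : (Fin n → ℝ) => (Real.fourierChar (-(W t x)) : Circle) • (f x : ℂ)) =
      fun x : (Fin n → ℝ) => Complex.exp (((∑ i, a t i * x i : ℝ) : ℂ) * Complex.I) * (f x : ℂ) := by
    intro t
    funext x
    rw [Circle.smul_def, Real.fourierChar_apply]
    congr 2
    rw [hWapply]
    push_cast
    have hπ : (π : ℂ) ≠ 0 := by exact_mod_cast Real.pi_ne_zero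
    field_simp
  have key : ∀ t, (∫ x : Fin n → ℝ, Real.cos (∑ i, a t i * x i) * f x) =
      (∫ x : Fin n → ℝ, (Real.fourierChar (-(W t x)) : Circle) • (f x : ℂ)).re := by
    intro t
    rw [show (fun x : Fin n → ℝ => (Real.fourierChar (-(W t x)) : Circle) • (f x : ℂ)) = _ from heq t]
    rw [← RCLike.re_to_complex, ← integral_re (hint t)]
    refine integral_congr_ae (Eventually.of_forall fun x => ?_)
    simp only [RCLike.re_to_complex]
    rw [mul_comm (Complex.exp _), Complex.re_ofReal_mul, Complex.exp_ofReal_mul_I_re]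
    ring
  have hfun : (fun t => ∫ x : Fin n → ℝ, Real.cos (∑ i, a t i * x i) * f x) =
      fun t => (∫ x : Fin n → ℝ, (Real.fourierChar (-(W t x)) : Circle) • (f x : ℂ)).re :=
    funext key
  rw [hfun]
  have := (Complex.continuous_re.tendsto 0).comp hRL
  exact this





lemma invariant_zpow {n : ℕ} {σ : Equiv.Perm (Fin n)} {S : Type*} {p : Fin n → S}
    (hp : ∀ i, p (σ i) = p i) : ∀ (k : ℤ) (i : Fin n), p ((σ ^ k) i) = p i := by
  have hinv : ∀ i, p (σ⁻¹ i) = p i := by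
    intro i
    conv_rhs => rw [← (show σ (σ⁻¹ i) = i from σ.apply_symm_apply i)]
    rw [hp]
  intro k
  induction k using Int.induction_on with
  | zero => simp
  | succ k ih =>
      intro i
      rw [zpow_add_one, Equiv.Perm.mul_apply, ih, hp]
  | pred k ih =>
      intro i
      rw [zpow_sub_one, Equiv.Perm.mul_apply, ih, hinv]

def invariantEquiv {n : ℕ} (σ : Equiv.Perm (Fin n)) (S : Type*) :
    {p : Fin n → S // ∀ i, p (σ i) = p i} ≃ (Quotient (sameCycleSetoid σ) → S) where
  toFun p := Quotient.lift p.1 (fun a b hab => by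
    obtain ⟨k, hk⟩ := hab
    rw [← hk]
    exact (invariant_zpow p.2 k a).symm)
  invFun q := ⟨fun i => q (Quotient.mk (sameCycleSetoid σ) i), fun i =>
    congrArg q (Quotient.sound (show σ.SameCycle (σ i) i from ⟨-1, by simp⟩))⟩
  left_inv p := Subtype.ext (funext fun i => rfl)
  right_inv q := funext (fun c => Quotient.inductionOn c (fun i => rfl))

lemma card_invariant {n : ℕ} (σ : Equiv.Perm (Fin n)) (S : Type*) [Fintype S] :
    Nat.card {p : Fin n → S // ∀ i, p (σ i) = p i} = (Fintype.card S) ^ (cycleCount σ) := by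
  rw [Nat.card_congr (invariantEquiv σ S)]
  have : Finite (Quotient (sameCycleSetoid σ)) := Quotient.finite _
  rw [Nat.card_fun, Nat.card_eq_fintype_card, cycleCount]

lemma cycleCount_le {n : ℕ} (σ : Equiv.Perm (Fin n)) : cycleCount σ ≤ n := by
  have hs : Function.Surjective (Quotient.mk (sameCycleSetoid σ)) := by
    intro q
    exact Quotient.inductionOn q fun i => ⟨i, rfl⟩
  have h := Nat.card_le_card_of_surjective _ hs
  simpa [cycleCount, Nat.card_eq_fintype_card] using h

/-- Cycle lemma for `B` frequencies (even type): if `ω_j(t) → ∞` and `|ω_j(t) − ω_k(t)| → ∞`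
for `j ≠ k`, then for bounded, measurable, compactly supported `f`,
`∫ (∏ i (1/B) ∑_j cos(ω_j(t)(x_{σ(i)} − x_i))) f(x) dx → (1/(2B))^(n − m(σ)) ∫ f(x) dx`. -/
theorem cycle_lemma_even_type (n B : ℕ) (hn : 1 ≤ n) (hB : 1 ≤ B)
    (σ : Equiv.Perm (Fin n)) (ω : Fin B → ℕ → ℝ)
    (hω : ∀ j, Tendsto (ω j) atTop atTop)
    (hsep : ∀ j k, j ≠ k → Tendsto (fun t => |ω j t - ω k t|) atTop atTop)
    (f : (Fin n → ℝ) → ℝ) (hmeas : Measurable f) (hbd : ∃ C : ℝ, ∀ x, |f x| ≤ C)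
    (hsupp : HasCompactSupport f) :
    Tendsto (fun t : ℕ =>
        ∫ x : Fin n → ℝ,
          (∏ i, (1 / (B : ℝ)) * ∑ j : Fin B, Real.cos (ω j t * (x (σ i) - x i))) * f x)
      atTop
      (nhds ((1 / (2 * (B : ℝ))) ^ (n - cycleCount σ) * ∫ x : Fin n → ℝ, f x)) := by
  classical
  obtain ⟨C, hC⟩ := hbd
  have hB0 : (0:ℝ) < B := by exact_mod_cast hB
  -- integrability of f
  have hfi : Integrable f := by
    have hK : IsCompact (tsupport f) := hsupp
    have hmeasK : MeasurableSet (tsupport f) := (isClosed_tsupport f).measurableSet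
    have h1 : IntegrableOn f (tsupport f) := by
      refine Measure.integrableOn_of_bounded (M := C) hK.measure_lt_top.ne
        hmeas.aestronglyMeasurable ?_
      exact ae_of_all _ fun x => by simpa [Real.norm_eq_abs] using hC x
    have h2 : Set.indicator (tsupport f) f = f := Set.indicator_eq_self.2 (subset_tsupport f)
    rw [← h2, Set.indicator_eq_self.2 (subset_tsupport f), ← h2]
    exact (integrable_indicator_iff hmeasK).2 h1
  set a : (Fin n → Fin B × Bool) → ℕ → Fin n → ℝ := fun p t k =>
    sgB (p (σ⁻¹ k)).2 * ω (p (σ⁻¹ k)).1 t - sgB (p k).2 * ω (p k).1 t with ha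
  -- pointwise expansion of the product
  have hpoint : ∀ (t : ℕ) (x : Fin n → ℝ),
      (∏ i, (1 / (B : ℝ)) * ∑ j : Fin B, Real.cos (ω j t * (x (σ i) - x i)))
        = (1 / (2 * (B:ℝ)))^n * ∑ p : Fin n → Fin B × Bool,
            Real.cos (∑ k, a p t k * x k) := by
    intro t x
    calc ∏ i, (1 / (B : ℝ)) * ∑ j : Fin B, Real.cos (ω j t * (x (σ i) - x i))
        = (1/(B:ℝ))^n * ∏ i, ∑ j : Fin B, Real.cos (ω j t * (x (σ i) - x i)) := by
          rw [Finset.prod_mul_distrib, Finset.prod_const, Finset.card_univ, Fintype.card_fin]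
      _ = (1/(B:ℝ))^n * ∑ c : Fin n → Fin B, ∏ i,
            Real.cos (ω (c i) t * (x (σ i) - x i)) := by
          rw [Finset.prod_univ_sum, Fintype.piFinset_univ]
      _ = (1/(B:ℝ))^n * ∑ c : Fin n → Fin B, ((1/2:ℝ)^n *
            ∑ ε : Fin n → Bool, Real.cos (∑ i, sgB (ε i) * (ω (c i) t * (x (σ i) - x i)))) := by
          congr 1
          exact Finset.sum_congr rfl fun c _ => prod_cos_expand n _
      _ = (1/(2*(B:ℝ)))^n * ∑ c : Fin n → Fin B, ∑ ε : Fin n → Bool,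
            Real.cos (∑ i, sgB (ε i) * (ω (c i) t * (x (σ i) - x i))) := by
          rw [← Finset.mul_sum, ← mul_assoc, ← mul_pow]
          congr 2
          rw [div_mul_div_comm]
          norm_num
          ring
      _ = (1/(2*(B:ℝ)))^n * ∑ p : Fin n → Fin B × Bool,
            Real.cos (∑ i, sgB ((p i).2) * (ω ((p i).1) t * (x (σ i) - x i))) := by
          congr 1
          have := Fintype.sum_equiv (Equiv.arrowProdEquivProdArrow (Fin n) (fun _ => Fin B) (fun _ => Bool))
            (fun p : Fin n → Fin B × Bool =>
              Real.cos (∑ i, sgB ((p i).2) * (ω ((p i).1) t * (x (σ i) - x i))))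
            (fun q : (Fin n → Fin B) × (Fin n → Bool) =>
              Real.cos (∑ i, sgB ((q.2 i)) * (ω (q.1 i) t * (x (σ i) - x i))))
            (fun p => rfl)
          rw [this, Fintype.sum_prod_type]
      _ = (1 / (2 * (B:ℝ)))^n * ∑ p : Fin n → Fin B × Bool,
            Real.cos (∑ k, a p t k * x k) := by
          congr 1
          refine Finset.sum_congr rfl fun p _ => ?_
          congr 1
          calc ∑ i, sgB ((p i).2) * (ω ((p i).1) t * (x (σ i) - x i))
              = ∑ i, (sgB (p (σ⁻¹ (σ i))).2 * ω (p (σ⁻¹ (σ i))).1 t * x (σ i)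
                  - sgB (p i).2 * ω (p i).1 t * x i) := by
                refine Finset.sum_congr rfl fun i _ => ?_
                rw [show σ⁻¹ (σ i) = i from σ.symm_apply_apply i]
                ring
            _ = (∑ i, sgB (p (σ⁻¹ (σ i))).2 * ω (p (σ⁻¹ (σ i))).1 t * x (σ i))
                - ∑ i, sgB (p i).2 * ω (p i).1 t * x i := Finset.sum_sub_distrib _ _
            _ = (∑ k, sgB (p (σ⁻¹ k)).2 * ω (p (σ⁻¹ k)).1 t * x k)
                - ∑ k, sgB (p k).2 * ω (p k).1 t * x k := by
                rw [Equiv.sum_comp σ (fun k => sgB (p (σ⁻¹ k)).2 * ω (p (σ⁻¹ k)).1 t * x k)]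
            _ = ∑ k, a p t k * x k := by
                rw [← Finset.sum_sub_distrib]
                refine Finset.sum_congr rfl fun k _ => ?_
                simp only [ha]
                ring
  -- integrability of the terms
  have hint : ∀ (p : Fin n → Fin B × Bool) (t : ℕ),
      Integrable (fun x : Fin n → ℝ => Real.cos (∑ k, a p t k * x k) * f x) := by
    intro p t
    refine Integrable.bdd_mul (c := 1) hfi ?_ (ae_of_all _ fun x => ?_)
    · exact (Real.continuous_cos.comp (continuous_finset_sum _ fun k _ =>
        (continuous_const.mul (continuous_apply k)))).aestronglyMeasurable
    · simpa [Real.norm_eq_abs] using Real.abs_cos_le_one _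
  -- the integral splits as a sum
  have hstep : ∀ t : ℕ, (∫ x : Fin n → ℝ,
        (∏ i, (1 / (B : ℝ)) * ∑ j : Fin B, Real.cos (ω j t * (x (σ i) - x i))) * f x)
      = (1/(2*(B:ℝ)))^n * ∑ p : Fin n → Fin B × Bool,
          ∫ x : Fin n → ℝ, Real.cos (∑ k, a p t k * x k) * f x := by
    intro t
    rw [show (fun x : Fin n → ℝ =>
          (∏ i, (1 / (B : ℝ)) * ∑ j : Fin B, Real.cos (ω j t * (x (σ i) - x i))) * f x)
        = fun x => ∑ p : Fin n → Fin B × Bool,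
            (1/(2*(B:ℝ)))^n * (Real.cos (∑ k, a p t k * x k) * f x) from
      funext fun x => by rw [hpoint t x, mul_assoc, Finset.sum_mul, Finset.mul_sum]]
    rw [integral_finset_sum _ (fun p _ => ((hint p t).const_mul _))]
    simp_rw [integral_const_mul]
    rw [← Finset.mul_sum]
  -- limit of each term
  have hlim : ∀ p : Fin n → Fin B × Bool,
      Tendsto (fun t => ∫ x : Fin n → ℝ, Real.cos (∑ k, a p t k * x k) * f x) atTop
        (𝓝 (if (∀ i, p (σ i) = p i) then (∫ x : Fin n → ℝ, f x) else 0)) := by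
    intro p
    by_cases hp : ∀ i, p (σ i) = p i
    · rw [if_pos hp]
      have hzero : ∀ t k, a p t k = 0 := by
        intro t k
        have hpk : p (σ⁻¹ k) = p k := by
          have := hp (σ⁻¹ k)
          rw [show σ (σ⁻¹ k) = k from σ.apply_symm_apply k] at this
          exact this.symm
        simp only [ha, hpk, sub_self]
      have hconst : ∀ t : ℕ, (fun x : Fin n → ℝ => Real.cos (∑ k, a p t k * x k) * f x) = f := by
        intro t
        funext x
        simp [hzero]
      simp only [hconst]
      exact tendsto_const_nhds
    · rw [if_neg hp]
      push_neg at hp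
      obtain ⟨i, hi⟩ := hp
      refine tendsto_integral_cos_zero n f hfi _ (σ i) ?_
      have hinv : σ⁻¹ (σ i) = i := σ.symm_apply_apply i
      have haeq : ∀ t, a p t (σ i)
          = sgB (p i).2 * ω (p i).1 t - sgB (p (σ i)).2 * ω (p (σ i)).1 t := by
        intro t
        simp only [ha, hinv]
      simp only [haeq]
      have habs1 : ∀ b : Bool, |sgB b| = 1 := by intro b; cases b <;> simp [sgB]
      rcases eq_or_ne (p i).2 (p (σ i)).2 with hb | hb
      · have hj : (p i).1 ≠ (p (σ i)).1 := by
          intro hj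
          exact hi (Prod.ext hj.symm hb.symm)
        have habs : ∀ t, |sgB (p i).2 * ω (p i).1 t - sgB (p (σ i)).2 * ω (p (σ i)).1 t|
            = |ω (p i).1 t - ω (p (σ i)).1 t| := by
          intro t
          rw [hb, ← mul_sub, abs_mul, habs1, one_mul]
        simp only [habs]
        exact hsep _ _ hj
      · have hsg : sgB (p (σ i)).2 = - sgB (p i).2 := sgB_ne hb
        have hge : ∀ t, ω (p i).1 t + ω (p (σ i)).1 t
            ≤ |sgB (p i).2 * ω (p i).1 t - sgB (p (σ i)).2 * ω (p (σ i)).1 t| := by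
          intro t
          have h1 : sgB (p i).2 * ω (p i).1 t - sgB (p (σ i)).2 * ω (p (σ i)).1 t
              = sgB (p i).2 * (ω (p i).1 t + ω (p (σ i)).1 t) := by
            rw [hsg]; ring
          rw [h1, abs_mul, habs1, one_mul]
          exact le_abs_self _
        exact tendsto_atTop_mono hge (Filter.Tendsto.atTop_add_atTop (hω _) (hω _))
  -- assemble
  have hfinal := (tendsto_finset_sum (Finset.univ)
    (fun (p : Fin n → Fin B × Bool) (_ : p ∈ Finset.univ) => hlim p)).const_mul
      ((1/(2*(B:ℝ)))^n)
  rw [show (fun t : ℕ => ∫ x : Fin n → ℝ,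
        (∏ i, (1 / (B : ℝ)) * ∑ j : Fin B, Real.cos (ω j t * (x (σ i) - x i))) * f x)
      = fun t => (1/(2*(B:ℝ)))^n * ∑ p : Fin n → Fin B × Bool,
          ∫ x : Fin n → ℝ, Real.cos (∑ k, a p t k * x k) * f x from funext hstep]
  convert hfinal using 2
  -- identify the limit values
  have hcount : (∑ p : Fin n → Fin B × Bool,
      (if (∀ i, p (σ i) = p i) then (∫ x : Fin n → ℝ, f x) else 0))
      = ((B * 2)^(cycleCount σ) : ℕ) * ∫ x : Fin n → ℝ, f x := by
    rw [Finset.sum_ite, Finset.sum_const_zero, add_zero, Finset.sum_const, nsmul_eq_mul]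
    congr 1
    have h1 : (Finset.univ.filter (fun p : Fin n → Fin B × Bool => ∀ i, p (σ i) = p i)).card
        = Fintype.card {p : Fin n → Fin B × Bool // ∀ i, p (σ i) = p i} :=
      (Fintype.card_subtype _).symm
    rw [h1, ← Nat.card_eq_fintype_card, card_invariant σ (Fin B × Bool)]
    norm_num [Fintype.card_prod]
  rw [hcount]
  have hmn : cycleCount σ ≤ n := cycleCount_le σ
  have h2B : (2*(B:ℝ)) ≠ 0 := by positivity
  push_cast
  have key : (1/(2*(B:ℝ)))^n * ((B:ℝ)*2)^(cycleCount σ)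
      = (1/(2*(B:ℝ)))^(n - cycleCount σ) := by
    have h1 : ((B:ℝ)*2) = 2*(B:ℝ) := by ring
    have h2 : (1/(2*(B:ℝ))) ≠ 0 := by positivity
    rw [h1, pow_sub₀ _ h2 hmn]
    congr 1
    rw [one_div, inv_pow, inv_inv]
  rw [← mul_assoc, key]
end
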